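/- Let x(t) = (r(t)·cos t, r(t)·sin t) with r(t) = a/(1 + e·cos(t − δ)), a > 0, defined on an interval where 1 + e·cos(t − δ) > 0. Then the derivative x'(t) is a positive scalar multiple of the vector (−e·sin δ − sin t, e·cos δ + cos t). -/

import Mathlib

theorem polar_conic_tangent_direction
    (a e δ : ℝ) (ha : 0 < a) (t : ℝ)
    (hden : 0 < 1 + e * Real.cos (t - δ)) :
    ∃ c : ℝ, 0 < c ∧
      HasDerivAt
        (fun s : ℝ =>
          ((a / (1 + e * Real.cos (s - δ))) * Real.cos s,
           (a / (1 + e * Real.cos (s - δ))) * Real.sin s))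
        (c • (-e * Real.sin δ - Real.sin t, e * Real.cos δ + Real.cos t)) t := by
  have hDne : (1 + e * Real.cos (t - δ)) ≠ 0 := ne_of_gt hden
  refine ⟨a / (1 + e * Real.cos (t - δ)) ^ 2, by positivity, ?_⟩
  have hcos : HasDerivAt (fun s => Real.cos (s - δ)) (-Real.sin (t - δ)) t := by
    simpa [Function.comp_def] using (Real.hasDerivAt_cos (t - δ)).comp t ((hasDerivAt_id t).sub_const δ)
  have hD' : HasDerivAt (fun s => 1 + e * Real.cos (s - δ)) (e * -Real.sin (t - δ)) t :=
    (hcos.const_mul e).const_add 1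
  have hr : HasDerivAt (fun s => a / (1 + e * Real.cos (s - δ)))
      ((0 * (1 + e * Real.cos (t - δ)) - a * (e * -Real.sin (t - δ))) /
        (1 + e * Real.cos (t - δ)) ^ 2) t :=
    (hasDerivAt_const t a).div hD' hDne
  have h := (hr.mul (Real.hasDerivAt_cos t)).prodMk (hr.mul (Real.hasDerivAt_sin t))
  have h1 : Real.sin (t - δ) * Real.cos t - Real.cos (t - δ) * Real.sin t = -Real.sin δ := by
    rw [← Real.sin_sub]; ring_nf; exact Real.sin_neg δ
  have h2 : Real.cos (t - δ) * Real.cos t + Real.sin (t - δ) * Real.sin t = Real.cos δ := by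
    rw [← Real.cos_sub]; ring_nf; exact Real.cos_neg δ
  convert h using 2
  · rfl
  · show _ = _
    have hs : -e * Real.sin δ - Real.sin t =
        e * (Real.sin (t - δ) * Real.cos t - Real.cos (t - δ) * Real.sin t) - Real.sin t := by
      rw [h1]; ring
    rw [hs]; simp only [Prod.smul_fst, smul_eq_mul]; field_simp; ring
  · show _ = _
    have hc : e * Real.cos δ + Real.cos t =
        e * (Real.cos (t - δ) * Real.cos t + Real.sin (t - δ) * Real.sin t) + Real.cos t := by
      rw [h2]
    rw [hc]; simp only [Prod.smul_snd, smul_eq_mul]; field_simp; ring
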